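/- For every m ≥ 1, every perfect graph on m(m+3)/2 vertices admits a partition of its vertex set into at most m parts, each of which is a clique or an independent set. (Proof sketch: by induction on m; if the chromatic number is at most m we are done using color classes as independent sets; otherwise perfection gives a clique of size at least m+1, which is removed as one part.) -/

import Mathlib

/-- A set `S` of vertices is `k`-sparse if every vertex of `S` has at most `k`
neighbors in `S`. -/
def kSparse {V : Type*} (G : SimpleGraph V) (k : ℕ) (S : Set V) : Prop :=
  ∀ v ∈ S, {u | u ∈ S ∧ G.Adj v u}.ncard ≤ k

/-- A set `S` of vertices is `k`-dense if every vertex of `S` has at most `k`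
non-neighbors in `S` other than itself. -/
def kDense {V : Type*} (G : SimpleGraph V) (k : ℕ) (S : Set V) : Prop :=
  ∀ v ∈ S, {u | u ∈ S ∧ u ≠ v ∧ ¬ G.Adj v u}.ncard ≤ k

/-- A graph is perfect if every induced subgraph has chromatic number equal to its
clique number. -/
def IsPerfect {V : Type*} (G : SimpleGraph V) : Prop :=
  ∀ S : Set V, (G.induce S).chromaticNumber = ((G.induce S).cliqueNum : ℕ∞)

open SimpleGraph

section IsoLemmas

variable {V W : Type*} {G : SimpleGraph V} {G' : SimpleGraph W}

lemma my_colorable_iff_of_iso (e : G ≃g G') (n : ℕ) : G.Colorable n ↔ G'.Colorable n := by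
  constructor
  · rintro ⟨C⟩; exact ⟨C.comp e.symm.toHom⟩
  · rintro ⟨C⟩; exact ⟨C.comp e.toHom⟩

lemma my_chromaticNumber_eq_of_iso (e : G ≃g G') :
    G.chromaticNumber = G'.chromaticNumber := by
  have h : setOf G.Colorable = setOf G'.Colorable := Set.ext (my_colorable_iff_of_iso e)
  rw [chromaticNumber_eq_biInf, chromaticNumber_eq_biInf]; exact congrArg (fun s : Set ℕ => ⨅ n ∈ s, ((n : ℕ) : ℕ∞)) h

lemma my_isNClique_image [DecidableEq W] (e : G ≃g G') {n : ℕ} {s : Finset V} (h : G.IsNClique n s) :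
    G'.IsNClique n (s.image e) := by
  classical
  constructor
  · rintro x hx y hy hne
    simp only [Finset.coe_image, Set.mem_image, Finset.mem_coe] at hx hy
    obtain ⟨a, ha, rfl⟩ := hx
    obtain ⟨b, hb, rfl⟩ := hy
    exact e.map_adj_iff.mpr (h.1 ha hb (fun hab => hne (by rw [hab])))
  · rw [Finset.card_image_of_injective _ e.injective, h.2]

lemma my_cliqueNum_eq_of_iso (e : G ≃g G') : G.cliqueNum = G'.cliqueNum := by
  classical
  have h : {n | ∃ s, G.IsNClique n s} = {n | ∃ s, G'.IsNClique n s} := by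
    ext n
    constructor
    · rintro ⟨s, hs⟩; exact ⟨s.image e, my_isNClique_image e hs⟩
    · rintro ⟨s, hs⟩; exact ⟨s.image e.symm, my_isNClique_image e.symm hs⟩
  unfold SimpleGraph.cliqueNum
  rw [h]

end IsoLemmas

/-- Iso between a doubly induced subgraph and the induced subgraph on the image. -/
noncomputable def myInduceInduceIso {V : Type*} (G : SimpleGraph V) (A : Set V) (S : Set A) :
    (G.induce A).induce S ≃g G.induce (Subtype.val '' S) where
  toEquiv := Equiv.Set.image Subtype.val S Subtype.val_injective
  map_rel_iff' := by
    intro a b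
    simp [Equiv.Set.image, Equiv.Set.imageOfInjOn]

lemma my_isPerfect_induce {V : Type*} {G : SimpleGraph V} (h : IsPerfect G) (A : Set V) :
    IsPerfect (G.induce A) := by
  intro S
  rw [my_chromaticNumber_eq_of_iso (myInduceInduceIso G A S),
      my_cliqueNum_eq_of_iso (myInduceInduceIso G A S)]
  exact h _

lemma my_arith (m : ℕ) : (m + 1) * (m + 1 + 3) / 2 = m * (m + 3) / 2 + (m + 2) := by
  have h2 : 2 ∣ m * (m + 3) := by
    rcases Nat.even_or_odd m with h | h
    · exact (h.mul_right _).two_dvd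
    · exact ((h.add_odd (by decide)).mul_left m).two_dvd
  obtain ⟨k, hk⟩ := h2
  have hb : (m + 1) * (m + 1 + 3) = m * (m + 3) + 2 * (m + 2) := by ring
  set a := m * (m + 3) with ha
  set b := (m + 1) * (m + 1 + 3) with hbb
  omega

universe u

lemma my_aux (m : ℕ) : ∀ {V : Type u} [Finite V] (G : SimpleGraph V), IsPerfect G →
    Nat.card V = m * (m + 3) / 2 →
    ∃ f : V → Fin m, ∀ c, G.IsClique {v | f v = c} ∨
      (∀ x ∈ {v | f v = c}, ∀ y ∈ {v | f v = c}, ¬ G.Adj x y) := by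
  induction m with
  | zero =>
    intro V _ G _ hcard
    have hE : IsEmpty V := by
      rcases Nat.card_eq_zero.mp (by simpa using hcard) with h | h
      · exact h
      · exact absurd h (not_infinite_iff_finite.mpr ‹_›)
    exact ⟨fun v => isEmptyElim v, fun c => c.elim0⟩
  | succ m ih =>
    intro V _ G hperf hcard
    haveI := Fintype.ofFinite V
    classical
    by_cases hχ : G.Colorable (m + 1)
    · obtain ⟨C⟩ := hχ
      refine ⟨C, fun c => Or.inr ?_⟩
      intro x hx y hy hadj
      exact C.valid hadj (hx.trans hy.symm)
    · have hχ' : ((m + 1 : ℕ) : ℕ∞) < G.chromaticNumber := by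
        by_contra h
        push_neg at h
        exact hχ ((chromaticNumber_le_iff_colorable).mp h)
      have hcn : G.chromaticNumber = (G.cliqueNum : ℕ∞) := by
        have h := hperf Set.univ
        rwa [my_chromaticNumber_eq_of_iso (induceUnivIso G),
          my_cliqueNum_eq_of_iso (induceUnivIso G)] at h
      have hge : m + 2 ≤ G.cliqueNum := by
        rw [hcn] at hχ'
        exact_mod_cast hχ'
      obtain ⟨s, hs⟩ := G.exists_isNClique_cliqueNum
      obtain ⟨K, hKs, hKcard⟩ := Finset.exists_subset_card_eq (s := s) (hs.2 ▸ hge)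
      have hK : G.IsNClique (m + 2) K := ⟨hs.isClique.subset (by exact_mod_cast hKs), hKcard⟩
      set A : Set V := (↑K : Set V)ᶜ with hA
      have hcardA : Nat.card ↥A = m * (m + 3) / 2 := by
        have h1 : (m + 2) + A.ncard = Nat.card V := by
          have h0 := Set.ncard_add_ncard_compl (↑K : Set V)
          rwa [Set.ncard_coe_finset, hKcard, ← hA] at h0
        rw [hcard] at h1
        rw [Nat.card_coe_set_eq]
        have h2 := my_arith m
        omega
      obtain ⟨f', hf'⟩ := ih (G.induce A) (my_isPerfect_induce hperf A) hcardA
      refine ⟨fun v => if h : v ∈ A then (f' ⟨v, h⟩).castSucc else Fin.last m, fun c => ?_⟩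
      refine Fin.lastCases ?_ (fun c' => ?_) c
      · left
        have hset : {v | (if h : v ∈ A then (f' ⟨v, h⟩).castSucc else Fin.last m) = Fin.last m}
            = (↑K : Set V) := by
          ext v
          simp only [Set.mem_setOf_eq]
          by_cases h : v ∈ A
          · simp only [dif_pos h]
            constructor
            · intro heq; exact absurd heq (Fin.castSucc_lt_last _).ne
            · intro hv; exact absurd hv h
          · simp only [dif_neg h]
            have : v ∈ (↑K : Set V) := by simpa [hA] using h
            simp [this]
        rw [hset]
        exact hK.isClique
      · -- class of castSucc c'
        have hmem : ∀ v : V, (if h : v ∈ A then (f' ⟨v, h⟩).castSucc else Fin.last m)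
            = Fin.castSucc c' → ∃ h : v ∈ A, f' ⟨v, h⟩ = c' := by
          intro v hv
          by_cases h : v ∈ A
          · rw [dif_pos h] at hv
            exact ⟨h, Fin.castSucc_inj.mp hv⟩
          · rw [dif_neg h] at hv
            exact absurd hv.symm (Fin.castSucc_lt_last c').ne
        rcases hf' c' with hcl | hind
        · left
          intro x hx y hy hne
          obtain ⟨hxA, hx'⟩ := hmem x hx
          obtain ⟨hyA, hy'⟩ := hmem y hy
          have hne' : (⟨x, hxA⟩ : ↥A) ≠ ⟨y, hyA⟩ := fun h => hne (congrArg Subtype.val h)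
          exact hcl hx' hy' hne'
        · right
          intro x hx y hy hadj
          obtain ⟨hxA, hx'⟩ := hmem x hx
          obtain ⟨hyA, hy'⟩ := hmem y hy
          exact hind ⟨x, hxA⟩ hx' ⟨y, hyA⟩ hy' hadj

/-- For every `m ≥ 1`, every perfect graph on `m(m+3)/2` vertices admits a partition
of its vertex set into at most `m` parts, each a clique or an independent set. -/
theorem stmt15 {V : Type*} [Fintype V] (m : ℕ) (hm : 1 ≤ m)
    (G : SimpleGraph V) (hperf : IsPerfect G)
    (hcard : Fintype.card V = m * (m + 3) / 2) :
    ∃ f : V → Fin m, ∀ c, G.IsClique {v | f v = c} ∨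
      (∀ x ∈ {v | f v = c}, ∀ y ∈ {v | f v = c}, ¬ G.Adj x y) :=
  my_aux m G hperf (by rw [Nat.card_eq_fintype_card]; exact hcard)
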